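/- arXiv:1503.05010 — 3 statements merged into one kernel-verified Lean document; each statement's English description precedes it below -/
import Mathlib

section
/- The pair (L, R), where L is the class of split monomorphisms and R is the class of split epimorphisms, is a weak factorization system on the category AddCommGrp of abelian groups: R = L^□, L = ^□R, and every morphism factors as a split monomorphism followed by a split epimorphism. -/
open CategoryTheory

universe v u

/-- A weak factorization system `(L, R)` on a category: `R = L^□`, `L = ^□R`, and
every morphism factors as a morphism in `L` followed by a morphism in `R`. -/
def IsWeakFactorizationSystem {K : Type u} [Category.{v} K]
    (L R : MorphismProperty K) : Prop :=
  (∀ ⦃X Y : K⦄ (g : X ⟶ Y),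
      R g ↔ ∀ ⦃A B : K⦄ (f : A ⟶ B), L f → HasLiftingProperty f g) ∧
  (∀ ⦃A B : K⦄ (f : A ⟶ B),
      L f ↔ ∀ ⦃X Y : K⦄ (g : X ⟶ Y), R g → HasLiftingProperty f g) ∧
  (∀ ⦃A B : K⦄ (h : A ⟶ B),
      ∃ (C : K) (f : A ⟶ C) (g : C ⟶ B), L f ∧ R g ∧ f ≫ g = h)

open Limits ZeroObject

lemma splitMono_hlp_splitEpi {A B X Y : AddCommGrpCat} (f : A ⟶ B) (g : X ⟶ Y)
    (hf : IsSplitMono f) (hg : IsSplitEpi g) : HasLiftingProperty f g := by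
  constructor
  intro t b sq
  refine ⟨⟨⟨retraction f ≫ t + b ≫ section_ g - retraction f ≫ f ≫ b ≫ section_ g,
    ?_, ?_⟩⟩⟩
  · simp [Preadditive.comp_add, Preadditive.comp_sub, ← Category.assoc]
  · simp [Preadditive.add_comp, Preadditive.sub_comp, Category.assoc, sq.w,
      reassoc_of% sq.w]

/-- (split monomorphisms, split epimorphisms) is a weak factorization
system on the category of abelian groups. -/
theorem splitMono_splitEpi_wfs :
    IsWeakFactorizationSystem
      (fun _ _ f => IsSplitMono f : MorphismProperty AddCommGrpCat)
      (fun _ _ g => IsSplitEpi g : MorphismProperty AddCommGrpCat) := by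
  refine ⟨?_, ?_, ?_⟩
  · intro X Y g
    constructor
    · intro hg A B f hf
      exact splitMono_hlp_splitEpi f g hf hg
    · intro h
      have hf : IsSplitMono (0 : (0 : AddCommGrpCat) ⟶ Y) :=
        ⟨⟨⟨0, (isZero_zero _).eq_of_src _ _⟩⟩⟩
      have := h (0 : (0 : AddCommGrpCat) ⟶ Y) hf
      have sq : CommSq (0 : (0 : AddCommGrpCat) ⟶ X) (0 : (0 : AddCommGrpCat) ⟶ Y) g (𝟙 Y) := by
        constructor; simp
      exact ⟨⟨⟨sq.lift, sq.fac_right⟩⟩⟩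
  · intro A B f
    constructor
    · intro hf X Y g hg
      exact splitMono_hlp_splitEpi f g hf hg
    · intro h
      have hg : IsSplitEpi (0 : A ⟶ (0 : AddCommGrpCat)) :=
        ⟨⟨⟨0, (isZero_zero _).eq_of_tgt _ _⟩⟩⟩
      have := h (0 : A ⟶ (0 : AddCommGrpCat)) hg
      have sq : CommSq (𝟙 A) f (0 : A ⟶ (0 : AddCommGrpCat)) 0 := by
        constructor; apply (isZero_zero _).eq_of_tgt
      exact ⟨⟨⟨sq.lift, sq.fac_left⟩⟩⟩
  · intro A B h
    refine ⟨A ⊞ B, biprod.lift (𝟙 A) h, biprod.snd, ?_, ?_, by simp⟩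
    · exact ⟨⟨⟨biprod.fst, by simp⟩⟩⟩
    · exact ⟨⟨⟨biprod.inr, by simp⟩⟩⟩
end

section
/- Let K be a category with a left accurate functorial factorization (E₀, l, r). Let (g, t) and (g', t') be R-algebras, let (x, y) : g → g' be a morphism in Arrow(K), and suppose there exists s : E₀(g) → E₀(Lg) making (Lg, s) an L-coalgebra. If for every L-coalgebra (f, σ) and every morphism (u, v) : f → g in Arrow(K) one has x ∘ t ∘ E(u,v) ∘ σ = t' ∘ E(x ∘ u, y ∘ v) ∘ σ, then x ∘ t = t' ∘ E(x,y), i.e. (x, y) is a morphism of R-algebras. -/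
open CategoryTheory CategoryTheory.Limits

universe v u

/-- A functorial factorization on `K`: a functor `E : Arrow K ⥤ K` together with
natural transformations `l` (from the domain functor) and `r` (to the codomain
functor) such that `Lf ≫ Rf = f` for every arrow `f`. -/
structure FunctorialFactorization (K : Type u) [Category.{v} K] where
  E : Arrow K ⥤ K
  l : (Arrow.leftFunc : Arrow K ⥤ K) ⟶ E
  r : E ⟶ (Arrow.rightFunc : Arrow K ⥤ K)
  fac : ∀ f : Arrow K, l.app f ≫ r.app f = f.hom

namespace FunctorialFactorization

variable {K : Type u} [Category.{v} K]

/-- The morphism `(id, Rf) : Lf ⟶ f` in the arrow category. -/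
def sqL (F : FunctorialFactorization K) (f : Arrow K) :
    Arrow.mk (F.l.app f) ⟶ f :=
  Arrow.homMk (u := 𝟙 f.left) (v := F.r.app f) (by exact (Category.id_comp _).trans (F.fac f).symm)

/-- The morphism `(Lf, id) : f ⟶ Rf` in the arrow category. -/
def sqR (F : FunctorialFactorization K) (f : Arrow K) :
    f ⟶ Arrow.mk (F.r.app f) :=
  Arrow.homMk (u := F.l.app f) (v := 𝟙 f.right) (by exact (F.fac f).trans (Category.comp_id _).symm)

/-- Left accuracy: `E(id, Rf) = R(Lf)` for every arrow `f`. -/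
def LeftAccurate (F : FunctorialFactorization K) : Prop :=
  ∀ f : Arrow K, F.E.map (F.sqL f) = F.r.app (Arrow.mk (F.l.app f))

/-- Right accuracy: `E(Lf, id) = L(Rf)` for every arrow `f`. -/
def RightAccurate (F : FunctorialFactorization K) : Prop :=
  ∀ f : Arrow K, F.E.map (F.sqR f) = F.l.app (Arrow.mk (F.r.app f))

/-- `(f, s)` is an `L`-coalgebra: `s ∘ f = Lf` and `Rf ∘ s = id`. -/
def IsCoalgebra (F : FunctorialFactorization K) (f : Arrow K)
    (s : f.right ⟶ F.E.obj f) : Prop :=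
  f.hom ≫ s = F.l.app f ∧ s ≫ F.r.app f = 𝟙 f.right

/-- `(g, t)` is an `R`-algebra: `g ∘ t = Rg` and `t ∘ Lg = id`. -/
def IsAlgebra (F : FunctorialFactorization K) (g : Arrow K)
    (t : F.E.obj g ⟶ g.left) : Prop :=
  t ≫ g.hom = F.r.app g ∧ F.l.app g ≫ t = 𝟙 g.left

end FunctorialFactorization

open FunctorialFactorization in
/-- (Fullness of `Γ`, Lemma 3.3.)  For a left accurate functorial
factorization, any morphism `(x, y) : g ⟶ g'` between `R`-algebras that is
compatible with all the induced lifting functions is a morphism of `R`-algebras. -/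
theorem algebra_hom_of_coherent {K : Type u} [Category.{v} K]
    (F : FunctorialFactorization K) (hF : F.LeftAccurate)
    (g g' : Arrow K) (t : F.E.obj g ⟶ g.left) (t' : F.E.obj g' ⟶ g'.left)
    (ht : F.IsAlgebra g t) (ht' : F.IsAlgebra g' t')
    (xy : g ⟶ g')
    (s : F.E.obj g ⟶ F.E.obj (Arrow.mk (F.l.app g)))
    (hs : F.IsCoalgebra (Arrow.mk (F.l.app g)) s)
    (coh : ∀ (f : Arrow K) (σ : f.right ⟶ F.E.obj f), F.IsCoalgebra f σ →
      ∀ φ : f ⟶ g, σ ≫ F.E.map φ ≫ t ≫ xy.left = σ ≫ F.E.map (φ ≫ xy) ≫ t') :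
    t ≫ xy.left = F.E.map xy ≫ t' := by
  have h := coh (Arrow.mk (F.l.app g)) s hs (F.sqL g)
  rw [F.E.map_comp, hF g] at h
  have hs2 : s ≫ F.r.app (Arrow.mk (F.l.app g)) = 𝟙 _ := hs.2
  calc t ≫ xy.left = 𝟙 _ ≫ t ≫ xy.left := (Category.id_comp _).symm
    _ = (s ≫ F.r.app (Arrow.mk (F.l.app g))) ≫ t ≫ xy.left :=
        congrArg (fun m => m ≫ t ≫ xy.left) hs2.symm
    _ = s ≫ F.r.app (Arrow.mk (F.l.app g)) ≫ t ≫ xy.left := Category.assoc _ _ _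
    _ = s ≫ (F.r.app (Arrow.mk (F.l.app g)) ≫ F.E.map xy) ≫ t' := h
    _ = s ≫ F.r.app (Arrow.mk (F.l.app g)) ≫ F.E.map xy ≫ t' :=
        congrArg (fun m => s ≫ m) (Category.assoc _ _ _)
    _ = (s ≫ F.r.app (Arrow.mk (F.l.app g))) ≫ F.E.map xy ≫ t' := (Category.assoc _ _ _).symm
    _ = 𝟙 _ ≫ F.E.map xy ≫ t' := congrArg (fun m => m ≫ F.E.map xy ≫ t') hs2
    _ = F.E.map xy ≫ t' := Category.id_comp _
end

section
/- Let K be a model category equipped with two functorial factorizations: (E₀, l, r) whose left parts Lf are cofibrations and whose right parts R₀f are trivial fibrations, and (E₀', l', r') whose left parts L₀'f are trivial cofibrations and whose right parts R'f are fibrations; define the composite factorization by L₀f := L₀'(Lf) and Rf := R₀f ∘ R'(Lf). Let f : A → B be a weak equivalence and let r : B → E₀(f) satisfy r ∘ f = Lf and R₀f ∘ r = id_B (i.e. (f, r) is an L-coalgebra). Then there exists s : B → E₀'(Lf) such that s ∘ f = L₀f, Rf ∘ s = id_B, and R'(Lf) ∘ s = r; in particular every L-coalgebra whose underlying morphism is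 a weak equivalence arises from an L₀-coalgebra. -/
open CategoryTheory CategoryTheory.Limits

universe v u

/-- A model structure on a category: weak equivalences satisfy 2-out-of-3 and are
closed under retracts in the arrow category, and (cofibrations, trivial fibrations)
and (trivial cofibrations, fibrations) are weak factorization systems. -/
structure ModelStructure (K : Type u) [Category.{v} K] where
  fib : MorphismProperty K
  cof : MorphismProperty K
  weq : MorphismProperty K
  weq_comp : ∀ ⦃X Y Z : K⦄ (f : X ⟶ Y) (g : Y ⟶ Z),
    weq f → weq g → weq (f ≫ g)
  weq_cancel_left : ∀ ⦃X Y Z : K⦄ (f : X ⟶ Y) (g : Y ⟶ Z),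
    weq f → weq (f ≫ g) → weq g
  weq_cancel_right : ∀ ⦃X Y Z : K⦄ (f : X ⟶ Y) (g : Y ⟶ Z),
    weq g → weq (f ≫ g) → weq f
  weq_retract : ∀ (f g : Arrow K) (i : f ⟶ g) (p : g ⟶ f),
    i ≫ p = 𝟙 f → weq g.hom → weq f.hom
  wfs₁ : IsWeakFactorizationSystem cof (fib ⊓ weq)
  wfs₂ : IsWeakFactorizationSystem (cof ⊓ weq) fib

namespace FunctorialFactorization

variable {K : Type u} [Category.{v} K]

/-- The functor `Arrow K ⥤ Arrow K` sending `f` to its left part `Lf`. -/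
@[simps]
def lArrow (F : FunctorialFactorization K) : Arrow K ⥤ Arrow K where
  obj f := Arrow.mk (F.l.app f)
  map {f g} φ := Arrow.homMk (u := φ.left) (v := F.E.map φ)
    (by exact F.l.naturality φ)

/-- The composite functorial factorization obtained from two functorial
factorizations `F₁` (with parts `L`, `R₀`) and `F₂` (with parts `L₀'`, `R'`) by
setting `L₀f := L₀'(Lf)` and `Rf := R₀f ∘ R'(Lf)`; its middle functor is
`f ↦ E₀'(Lf)`. -/
def comp (F₁ F₂ : FunctorialFactorization K) : FunctorialFactorization K where
  E := F₁.lArrow ⋙ F₂.E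
  l :=
    { app := fun f => F₂.l.app (F₁.lArrow.obj f)
      naturality := fun f g φ => F₂.l.naturality (F₁.lArrow.map φ) }
  r :=
    { app := fun f => F₂.r.app (F₁.lArrow.obj f) ≫ F₁.r.app f
      naturality := fun f g φ => by
        have h₂ := F₂.r.naturality (F₁.lArrow.map φ)
        have h₁ := F₁.r.naturality φ
        dsimp at h₂ h₁ ⊢
        erw [← Category.assoc, h₂, Category.assoc, h₁, Category.assoc]; rfl }
  fac := fun f => by
    have := F₂.fac (F₁.lArrow.obj f)
    dsimp at this ⊢
    erw [← Category.assoc, this]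
    exact F₁.fac f

end FunctorialFactorization

/-- With `F₁` a (cofibration, trivial fibration) functorial
factorization and `F₂` a (trivial cofibration, fibration) functorial factorization
on a model category, and the composite factorization `L₀f := L₀'(Lf)`,
`Rf := R₀f ∘ R'(Lf)`: every `L`-coalgebra `(f, r)` whose underlying morphism `f`
is a weak equivalence arises from an `L₀`-coalgebra, i.e. there is
`s : B ⟶ E₀'(Lf)` with `s ∘ f = L₀f`, `Rf ∘ s = id` and `R'(Lf) ∘ s = r`
(Remark 5.4(1)). -/
theorem coalgebra_lifts_through_comp {K : Type u} [Category.{v} K]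
    [HasLimits K] [HasColimits K] (M : ModelStructure K)
    (F₁ F₂ : FunctorialFactorization K)
    (h₁l : ∀ f : Arrow K, M.cof (F₁.l.app f))
    (h₁r : ∀ f : Arrow K, (M.fib ⊓ M.weq) (F₁.r.app f))
    (h₂l : ∀ f : Arrow K, (M.cof ⊓ M.weq) (F₂.l.app f))
    (h₂r : ∀ f : Arrow K, M.fib (F₂.r.app f))
    (f : Arrow K) (hf : M.weq f.hom)
    (r : f.right ⟶ F₁.E.obj f)
    (hr₁ : f.hom ≫ r = F₁.l.app f) (hr₂ : r ≫ F₁.r.app f = 𝟙 f.right) :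
    ∃ s : f.right ⟶ F₂.E.obj (Arrow.mk (F₁.l.app f)),
      f.hom ≫ s = (F₁.comp F₂).l.app f ∧
      s ≫ (F₁.comp F₂).r.app f = 𝟙 f.right ∧
      s ≫ F₂.r.app (Arrow.mk (F₁.l.app f)) = r := by

  -- f lifts against every trivial fibration, using the coalgebra structure
  have hcof : M.cof f.hom := by
    rw [M.wfs₁.2.1]
    intro X Y g hg
    constructor
    intro u v sq
    have hl : HasLiftingProperty (F₁.l.app f) g :=
      (M.wfs₁.2.1 _).mp (h₁l f) g hg
    have sq₂ : CommSq u (F₁.l.app f) g (F₁.r.app f ≫ v) := by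
      constructor
      erw [← Category.assoc, F₁.fac f]; exact sq.w
    have : sq₂.HasLift := hl.sq_hasLift sq₂
    exact ⟨⟨⟨r ≫ sq₂.lift,
      by rw [← Category.assoc, hr₁, sq₂.fac_left],
      by erw [Category.assoc, sq₂.fac_right, ← Category.assoc, hr₂]; exact Category.id_comp v⟩⟩⟩
  have hweq : (M.cof ⊓ M.weq) f.hom := ⟨hcof, hf⟩
  have hlift : HasLiftingProperty f.hom (F₂.r.app (Arrow.mk (F₁.l.app f))) := by
    exact (M.wfs₂.2.1 _).mp hweq _ (h₂r _)
  have sq : CommSq (F₂.l.app (Arrow.mk (F₁.l.app f))) f.hom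
      (F₂.r.app (Arrow.mk (F₁.l.app f))) r := by
    constructor
    rw [F₂.fac (Arrow.mk (F₁.l.app f))]
    exact hr₁.symm
  have : sq.HasLift := hlift.sq_hasLift sq
  refine ⟨sq.lift, sq.fac_left, ?_, sq.fac_right⟩
  show sq.lift ≫ F₂.r.app _ ≫ F₁.r.app f = _
  erw [← Category.assoc, sq.fac_right, hr₂]
end
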